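/- If a > 0, then for every x ∈ ℝ^d one has the lower bound A*x·x ≥ a^{−1} ( θ (A₂e₁·e₁)^{1/2} (A₁x·x)^{1/2} − (1−θ) (A₁e₁·e₁)^{1/2} (A₂x·x)^{1/2} )². -/

import Mathlib

open Matrix

lemma psd_cauchy_schwarz {d : ℕ} (A : Matrix (Fin d) (Fin d) ℝ) (hA : A.PosSemidef)
    (u v : Fin d → ℝ) :
    (A.mulVec u ⬝ᵥ v) ^ 2 ≤ (A.mulVec u ⬝ᵥ u) * (A.mulVec v ⬝ᵥ v) := by
  obtain ⟨B, rfl⟩ : ∃ B : Matrix (Fin d) (Fin d) ℝ, A = Bᴴ * B := by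
    classical
    open scoped MatrixOrder in exact CStarAlgebra.nonneg_iff_eq_star_mul_self.mp hA.nonneg
  have key : ∀ w z : Fin d → ℝ, (Bᴴ * B).mulVec w ⬝ᵥ z = B.mulVec w ⬝ᵥ B.mulVec z := by
    intro w z
    rw [← Matrix.mulVec_mulVec]
    simp only [conjTranspose_eq_transpose_of_trivial]
    rw [Matrix.mulVec_transpose, ← Matrix.dotProduct_mulVec, dotProduct_comm]
  rw [key, key, key]
  have := Finset.sum_mul_sq_le_sq_mul_sq Finset.univ (B.mulVec u) (B.mulVec v)
  simpa [dotProduct, pow_two] using this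

lemma vecMulVec_quad {d : ℕ} (w v x : Fin d → ℝ) :
    (vecMulVec w v).mulVec x ⬝ᵥ x = (w ⬝ᵥ x) * (v ⬝ᵥ x) := by
  simp only [mulVec, dotProduct, vecMulVec_apply, Finset.sum_mul, Finset.mul_sum]
  rw [Finset.sum_comm]
  congr 1; ext i; congr 1; ext j; ring


/-- If `a > 0`, the homogenized matrix `A*` satisfies the lower bound
`A*x·x ≥ a⁻¹ (θ (A₂e₁·e₁)^{1/2} (A₁x·x)^{1/2} − (1−θ) (A₁e₁·e₁)^{1/2} (A₂x·x)^{1/2})²`. -/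
theorem homogenized_matrix_lower_bound
    (d : ℕ) (hd : 2 ≤ d) (θ : ℝ) (hθ : θ ∈ Set.Ioo (0 : ℝ) 1)
    (A₁ A₂ : Matrix (Fin d) (Fin d) ℝ)
    (hA₁ : A₁.PosSemidef) (hA₂ : A₂.PosSemidef)
    (e₁ : Fin d → ℝ) (he₁ : e₁ = Pi.single (⟨0, by omega⟩ : Fin d) 1)
    (a : ℝ)
    (ha_def : a = (1 - θ) * (A₁.mulVec e₁ ⬝ᵥ e₁) + θ * (A₂.mulVec e₁ ⬝ᵥ e₁))
    (ha : 0 < a)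
    (Astar : Matrix (Fin d) (Fin d) ℝ)
    (hAstar : Astar = θ • A₁ + (1 - θ) • A₂
      - (θ * (1 - θ) / a) • vecMulVec ((A₂ - A₁).mulVec e₁) ((A₂ - A₁).mulVec e₁)) :
    ∀ x : Fin d → ℝ,
      a⁻¹ * (θ * Real.sqrt (A₂.mulVec e₁ ⬝ᵥ e₁) * Real.sqrt (A₁.mulVec x ⬝ᵥ x)
        - (1 - θ) * Real.sqrt (A₁.mulVec e₁ ⬝ᵥ e₁) * Real.sqrt (A₂.mulVec x ⬝ᵥ x)) ^ 2
      ≤ Astar.mulVec x ⬝ᵥ x := by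
  intro x
  obtain ⟨hθ0, hθ1⟩ := hθ
  have nneg : ∀ (A : Matrix (Fin d) (Fin d) ℝ), A.PosSemidef → ∀ y, 0 ≤ A.mulVec y ⬝ᵥ y := by
    intro A hA y
    have := hA.dotProduct_mulVec_nonneg y
    simpa [dotProduct_comm] using this
  set α₁ := A₁.mulVec e₁ ⬝ᵥ e₁ with hα₁
  set α₂ := A₂.mulVec e₁ ⬝ᵥ e₁ with hα₂
  set q₁ := A₁.mulVec x ⬝ᵥ x with hq₁
  set q₂ := A₂.mulVec x ⬝ᵥ x with hq₂
  have hα₁0 : 0 ≤ α₁ := nneg _ hA₁ _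
  have hα₂0 : 0 ≤ α₂ := nneg _ hA₂ _
  have hq₁0 : 0 ≤ q₁ := nneg _ hA₁ _
  have hq₂0 : 0 ≤ q₂ := nneg _ hA₂ _
  set s₁ := Real.sqrt α₁ with hs₁
  set s₂ := Real.sqrt α₂ with hs₂
  set t₁ := Real.sqrt q₁ with ht₁
  set t₂ := Real.sqrt q₂ with ht₂
  have hs₁sq : s₁ ^ 2 = α₁ := Real.sq_sqrt hα₁0
  have hs₂sq : s₂ ^ 2 = α₂ := Real.sq_sqrt hα₂0
  have ht₁sq : t₁ ^ 2 = q₁ := Real.sq_sqrt hq₁0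
  have ht₂sq : t₂ ^ 2 = q₂ := Real.sq_sqrt hq₂0
  have hs₁0 : 0 ≤ s₁ := Real.sqrt_nonneg _
  have hs₂0 : 0 ≤ s₂ := Real.sqrt_nonneg _
  have ht₁0 : 0 ≤ t₁ := Real.sqrt_nonneg _
  have ht₂0 : 0 ≤ t₂ := Real.sqrt_nonneg _
  set b := (A₂ - A₁).mulVec e₁ ⬝ᵥ x with hb
  -- quadratic form expansion
  have hquad : Astar.mulVec x ⬝ᵥ x = θ * q₁ + (1 - θ) * q₂ - (θ * (1 - θ) / a) * b ^ 2 := by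
    rw [hAstar]
    rw [Matrix.sub_mulVec, Matrix.add_mulVec, Matrix.smul_mulVec,
      Matrix.smul_mulVec, Matrix.smul_mulVec,
      sub_dotProduct, add_dotProduct, smul_dotProduct,
      smul_dotProduct, smul_dotProduct, vecMulVec_quad]
    simp only [smul_eq_mul, ← hb, ← hq₁, ← hq₂]
    ring
  rw [hquad]
  -- Cauchy-Schwarz bounds
  have hc₁ : (A₁.mulVec e₁ ⬝ᵥ x) ^ 2 ≤ (s₁ * t₁) ^ 2 := by
    have := psd_cauchy_schwarz A₁ hA₁ e₁ x
    calc (A₁.mulVec e₁ ⬝ᵥ x) ^ 2 ≤ α₁ * q₁ := this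
    _ = (s₁ * t₁) ^ 2 := by rw [mul_pow, hs₁sq, ht₁sq]
  have hc₂ : (A₂.mulVec e₁ ⬝ᵥ x) ^ 2 ≤ (s₂ * t₂) ^ 2 := by
    have := psd_cauchy_schwarz A₂ hA₂ e₁ x
    calc (A₂.mulVec e₁ ⬝ᵥ x) ^ 2 ≤ α₂ * q₂ := this
    _ = (s₂ * t₂) ^ 2 := by rw [mul_pow, hs₂sq, ht₂sq]
  have hbval : b = (A₂.mulVec e₁ ⬝ᵥ x) - (A₁.mulVec e₁ ⬝ᵥ x) := by
    rw [hb, Matrix.sub_mulVec, sub_dotProduct]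
  have hb2 : b ^ 2 ≤ (s₁ * t₁ + s₂ * t₂) ^ 2 := by
    set c₁ := A₁.mulVec e₁ ⬝ᵥ x
    set c₂ := A₂.mulVec e₁ ⬝ᵥ x
    have h1 : |c₁| ≤ s₁ * t₁ := by
      rw [← Real.sqrt_sq_eq_abs, ← Real.sqrt_sq (by positivity : (0:ℝ) ≤ s₁ * t₁)]
      exact Real.sqrt_le_sqrt hc₁
    have h2 : |c₂| ≤ s₂ * t₂ := by
      rw [← Real.sqrt_sq_eq_abs, ← Real.sqrt_sq (by positivity : (0:ℝ) ≤ s₂ * t₂)]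
      exact Real.sqrt_le_sqrt hc₂
    have habs : |b| ≤ s₁ * t₁ + s₂ * t₂ := by
      rw [hbval, sub_eq_add_neg]
      calc |c₂ + -c₁| ≤ |c₂| + |(-c₁)| := abs_add_le _ _
        _ = |c₂| + |c₁| := by rw [abs_neg]
        _ ≤ s₂ * t₂ + s₁ * t₁ := add_le_add h2 h1
        _ = s₁ * t₁ + s₂ * t₂ := by ring
    calc b ^ 2 = |b| ^ 2 := (sq_abs b).symm
      _ ≤ (s₁ * t₁ + s₂ * t₂) ^ 2 := by
          apply pow_le_pow_left₀ (abs_nonneg b) habs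
  -- key identity
  have hane : a ≠ 0 := ne_of_gt ha
  have hadef' : a = (1 - θ) * s₁ ^ 2 + θ * s₂ ^ 2 := by rw [hs₁sq, hs₂sq]; exact ha_def
  have key : a⁻¹ * (θ * s₂ * t₁ - (1 - θ) * s₁ * t₂) ^ 2
      = θ * t₁ ^ 2 + (1 - θ) * t₂ ^ 2 - (θ * (1 - θ) / a) * (s₁ * t₁ + s₂ * t₂) ^ 2 := by
    field_simp
    rw [hadef']
    ring
  calc a⁻¹ * (θ * s₂ * t₁ - (1 - θ) * s₁ * t₂) ^ 2
      = θ * t₁ ^ 2 + (1 - θ) * t₂ ^ 2 - (θ * (1 - θ) / a) * (s₁ * t₁ + s₂ * t₂) ^ 2 := key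
    _ ≤ θ * t₁ ^ 2 + (1 - θ) * t₂ ^ 2 - (θ * (1 - θ) / a) * b ^ 2 := by
        have hpos : 0 ≤ θ * (1 - θ) / a := div_nonneg (mul_nonneg hθ0.le (by linarith)) ha.le
        have := mul_le_mul_of_nonneg_left hb2 hpos
        linarith
    _ = θ * q₁ + (1 - θ) * q₂ - (θ * (1 - θ) / a) * b ^ 2 := by rw [ht₁sq, ht₂sq]
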